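/- Let r ≥ 1 be an integer. Then γ̄_{h^{(r)}} = (1/Γ(r))·( γ_{h^{(1)}} − (ψ(r)+γ)·γ + ∑_{j=1}^{r−1} (H_j − ln(1+j))/j ), equivalently Γ(r)·γ̄_{h^{(r)}} = γ²/2 + ζ(2)/2 − 1/2 + ∫_0^∞ ln(1+t²)/((e^{2πt} − 1)·t) dt − (ψ(r)+γ)·γ + ∑_{j=1}^{r−1} (H_j − ln(1+j))/j. -/

import Mathlib

open MeasureTheory Filter Topology

/-- The digamma function `ψ(x) = Γ'(x)/Γ(x)`. -/
noncomputable def digamma (x : ℝ) : ℝ := deriv Real.Gamma x / Real.Gamma x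

/-- The rising factorial `x^{r̄} = Γ(x+r)/Γ(x)`. -/
noncomputable def rise (x r : ℝ) : ℝ := Real.Gamma (x + r) / Real.Gamma x

/-- The analytic extension of the hyperharmonic numbers:
`h_x^{(r)} = (x^{r̄}/(x Γ(r)))(ψ(x+r) − ψ(r))` for `r > 0`, and `h_x^{(0)} = 1/x`. -/
noncomputable def hyp (r x : ℝ) : ℝ :=
  if r = 0 then 1 / x
  else rise x r / (x * Real.Gamma r) * (digamma (x + r) - digamma r)

/-- `y_n(r) = ∑_{k=1}^n h_k^{(r)}/k^r − ∫_1^n h_x^{(r)}/x^r dx`. -/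
noncomputable def yseq (r : ℝ) (n : ℕ) : ℝ :=
  ∑ k ∈ Finset.Icc 1 n, hyp r k / (k : ℝ) ^ r - ∫ x in (1:ℝ)..(n:ℝ), hyp r x / x ^ r

/-- `z_n(r) = ∑_{k=1}^{n-1} h_k^{(r)}/k^r − ∫_1^n h_x^{(r)}/x^r dx`. -/
noncomputable def zseq (r : ℝ) (n : ℕ) : ℝ :=
  ∑ k ∈ Finset.Icc 1 (n - 1), hyp r k / (k : ℝ) ^ r - ∫ x in (1:ℝ)..(n:ℝ), hyp r x / x ^ r

/-- `b_n(r) = ∑_{k=1}^n h_k^{(r)}/k^{r̄} − ∫_1^n h_x^{(r)}/x^{r̄} dx`. -/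
noncomputable def bseq (r : ℝ) (n : ℕ) : ℝ :=
  ∑ k ∈ Finset.Icc 1 n, hyp r k / rise k r - ∫ x in (1:ℝ)..(n:ℝ), hyp r x / rise x r

/-- `a_n(r) = ∑_{k=1}^{n-1} h_k^{(r)}/k^{r̄} − ∫_1^n h_x^{(r)}/x^{r̄} dx`. -/
noncomputable def aseq (r : ℝ) (n : ℕ) : ℝ :=
  ∑ k ∈ Finset.Icc 1 (n - 1), hyp r k / rise k r - ∫ x in (1:ℝ)..(n:ℝ), hyp r x / rise x r
/-- The `m`-th harmonic number `H_m = ∑_{k=1}^m 1/k` (with `H 0 = 0`). -/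
noncomputable def H (m : ℕ) : ℝ := ∑ k ∈ Finset.Icc 1 m, (1 : ℝ) / k

/-- The generalized harmonic number `H_m^{(s)} = ∑_{k=1}^m 1/k^s`. -/
noncomputable def Hgen (m s : ℕ) : ℝ := ∑ k ∈ Finset.Icc 1 m, (1 : ℝ) / (k : ℝ) ^ s

/-- The unsigned Stirling numbers of the first kind, via the recurrence
`[n+1, k+1] = n·[n, k+1] + [n, k]`, `[0,0] = 1`. -/
def stirling1 : ℕ → ℕ → ℕ
  | 0, 0 => 1
  | 0, _ + 1 => 0
  | _ + 1, 0 => 0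
  | n + 1, k + 1 => n * stirling1 n (k + 1) + stirling1 n k

lemma ne_neg_nat {x : ℝ} (hx : 0 < x) (m : ℕ) : x ≠ -m :=
  ne_of_gt (lt_of_le_of_lt (neg_nonpos.mpr (Nat.cast_nonneg m)) hx)

lemma cne_neg_nat {x : ℝ} (hx : 0 < x) (m : ℕ) : (x : ℂ) ≠ -m := by
  intro h
  have := congrArg Complex.re h
  simp at this
  have := Nat.cast_nonneg (α := ℝ) m
  linarith

lemma deriv_Gamma_eq_re {t : ℝ} (ht : 0 < t) :
    deriv Real.Gamma t = (deriv Complex.Gamma t).re := by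
  have hd : DifferentiableAt ℂ Complex.Gamma t :=
    Complex.differentiableAt_Gamma _ (cne_neg_nat ht)
  have h3 : HasDerivAt Real.Gamma (deriv Complex.Gamma t).re t := by
    simpa only [Complex.Gamma_ofReal, Complex.ofReal_re] using hd.hasDerivAt.real_of_complex
  exact h3.deriv

lemma continuousAt_deriv_Gamma {t : ℝ} (ht : 0 < t) : ContinuousAt (deriv Real.Gamma) t := by
  have hU : IsOpen {s : ℂ | 0 < s.re} := isOpen_lt continuous_const Complex.continuous_re
  have hdiff : DifferentiableOn ℂ Complex.Gamma {s : ℂ | 0 < s.re} := fun s hs =>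
    (Complex.differentiableAt_Gamma s (fun m => by
      intro h; rw [h] at hs
      simp only [Set.mem_setOf_eq, Complex.neg_re, Complex.natCast_re] at hs
      have := Nat.cast_nonneg (α := ℝ) m
      linarith)).differentiableWithinAt
  have han := (hdiff.analyticOnNhd hU).deriv
  have hcont : ContinuousAt (fun y : ℝ => (deriv Complex.Gamma y).re) t := by
    apply Complex.continuous_re.continuousAt.comp
    exact ((han _ (by simpa using ht)).continuousAt).comp Complex.continuous_ofReal.continuousAt
  apply hcont.congr
  filter_upwards [eventually_gt_nhds ht] with y hy
  exact (deriv_Gamma_eq_re hy).symm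

lemma continuousAt_Gamma' {x : ℝ} (hx : 0 < x) : ContinuousAt Real.Gamma x :=
  (Real.differentiableAt_Gamma (ne_neg_nat hx)).continuousAt

lemma continuousAt_digamma {x : ℝ} (hx : 0 < x) : ContinuousAt digamma x :=
  (continuousAt_deriv_Gamma hx).div (continuousAt_Gamma' hx) (Real.Gamma_pos_of_pos hx).ne'

lemma dig_rec {x : ℝ} (hx : 0 < x) : digamma (x + 1) = digamma x + 1 / x := by
  have hdx : HasDerivAt Real.Gamma (deriv Real.Gamma x) x :=
    (Real.differentiableAt_Gamma (ne_neg_nat hx)).hasDerivAt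
  have h1 : HasDerivAt (fun y => Real.Gamma (y + 1)) (deriv Real.Gamma (x + 1)) x := by
    have h := (Real.differentiableAt_Gamma (ne_neg_nat (by positivity : (0:ℝ) < x + 1))).hasDerivAt
    simpa [Function.comp_def] using h.comp x ((hasDerivAt_id x).add_const 1)
  have h2 : HasDerivAt (fun y => y * Real.Gamma y)
      (1 * Real.Gamma x + x * deriv Real.Gamma x) x := (hasDerivAt_id x).mul hdx
  have heq : (fun y => Real.Gamma (y + 1)) =ᶠ[𝓝 x] fun y => y * Real.Gamma y := by
    filter_upwards [eventually_gt_nhds hx] with y hy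
    exact Real.Gamma_add_one hy.ne'
  have hder : deriv Real.Gamma (x + 1) = Real.Gamma x + x * deriv Real.Gamma x := by
    have := h1.unique (h2.congr_of_eventuallyEq heq)
    rw [this, one_mul]
  unfold digamma
  rw [hder, Real.Gamma_add_one hx.ne']
  have hΓ := (Real.Gamma_pos_of_pos hx).ne'
  field_simp
  ring

lemma dig_one : digamma 1 = -Real.eulerMascheroniConstant := by
  unfold digamma
  rw [Real.hasDerivAt_Gamma_one.deriv, Real.Gamma_one, div_one]

lemma dig_shift {x : ℝ} (hx : 0 < x) (m : ℕ) :
    digamma (x + m) = digamma x + ∑ j ∈ Finset.range m, 1 / (x + j) := by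
  induction m with
  | zero => simp
  | succ m ih =>
    have h : x + ((m : ℕ) + 1 : ℕ) = (x + m) + 1 := by push_cast; ring
    rw [h, dig_rec (by positivity), ih, Finset.sum_range_succ]
    push_cast
    ring

lemma H_eq_harmonic (m : ℕ) : H m = (harmonic m : ℝ) := by
  rw [H, harmonic_eq_sum_Icc]
  push_cast
  simp [one_div]

lemma H_eq_range (m : ℕ) : H m = ∑ j ∈ Finset.range m, 1 / ((j : ℝ) + 1) := by
  rw [H_eq_harmonic, harmonic]
  push_cast
  simp [one_div]

lemma dig_nat (r : ℕ) (hr : 1 ≤ r) :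
    digamma r = -Real.eulerMascheroniConstant + H (r - 1) := by
  have h : (r : ℝ) = 1 + ((r - 1 : ℕ) : ℝ) := by
    have : ((r - 1 : ℕ) : ℝ) = (r : ℝ) - 1 := by
      push_cast [Nat.cast_sub hr]; ring
    rw [this]; ring
  rw [h, dig_shift one_pos, dig_one, H_eq_range]
  congr 1
  refine Finset.sum_congr rfl fun j _ => ?_
  rw [add_comm]

lemma sum_inv_shift (n j : ℕ) :
    ∑ k ∈ Finset.Icc 1 n, 1 / ((k : ℝ) + j) = H (n + j) - H j := by
  induction n with
  | zero => simp
  | succ n ih =>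
    rw [Finset.sum_Icc_succ_top (by omega : 1 ≤ n + 1), ih]
    have h2 : H (n + 1 + j) = H (n + j) + 1 / ((n : ℝ) + 1 + j) := by
      have h3 : n + 1 + j = (n + j) + 1 := by omega
      rw [h3, H, Finset.sum_Icc_succ_top (by omega : 1 ≤ n + j + 1), ← H]
      push_cast
      ring_nf
    rw [h2]
    push_cast
    ring

lemma rise_pos {x r : ℝ} (hx : 0 < x) (hr : 0 ≤ r) : 0 < rise x r :=
  div_pos (Real.Gamma_pos_of_pos (by linarith)) (Real.Gamma_pos_of_pos hx)

lemma rise_one {x : ℝ} (hx : 0 < x) : rise x 1 = x := by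
  unfold rise
  rw [Real.Gamma_add_one hx.ne']
  field_simp [(Real.Gamma_pos_of_pos hx).ne']

lemma sum_Icc_one (m : ℕ) (f : ℕ → ℝ) :
    ∑ j ∈ Finset.Icc 1 m, f j = ∑ j ∈ Finset.range m, f (j + 1) := by
  induction m with
  | zero => simp
  | succ m ih => rw [Finset.sum_Icc_succ_top (by omega : 1 ≤ m + 1), ih, Finset.sum_range_succ]

lemma key_id (r : ℕ) (hr : 1 ≤ r) {x : ℝ} (hx : 0 < x) :
    Real.Gamma r * (hyp r x / rise x r) =
      hyp 1 x / x ^ (1:ℝ) - ∑ j ∈ Finset.Icc 1 (r - 1), 1 / ((j : ℝ) * (x + j)) := by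
  have hr0 : (0:ℝ) < r := by exact_mod_cast hr
  have hΓr : Real.Gamma (r:ℝ) ≠ 0 := (Real.Gamma_pos_of_pos hr0).ne'
  have hrise : rise x r ≠ 0 := (rise_pos hx hr0.le).ne'
  have e1 : hyp (r:ℝ) x / rise x r = (digamma (x + r) - digamma r) / (x * Real.Gamma r) := by
    rw [hyp, if_neg hr0.ne']
    field_simp
  have e2 : hyp 1 x / x ^ (1:ℝ) = (digamma (x + 1) - digamma 1) / x := by
    rw [hyp, if_neg one_ne_zero, Real.rpow_one, rise_one hx, Real.Gamma_one]
    field_simp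
  have e3 : digamma (x + r) = digamma (x + 1) + ∑ j ∈ Finset.Icc 1 (r - 1), 1 / (x + j) := by
    have h : x + (r:ℝ) = (x + 1) + ((r - 1 : ℕ) : ℝ) := by
      have : ((r - 1 : ℕ) : ℝ) = (r:ℝ) - 1 := by push_cast [Nat.cast_sub hr]; ring
      rw [this]; ring
    rw [h, dig_shift (by positivity), sum_Icc_one]
    congr 1
    refine Finset.sum_congr rfl fun j _ => ?_
    push_cast
    ring_nf
  have e4 : digamma (r:ℝ) = digamma 1 + ∑ j ∈ Finset.Icc 1 (r - 1), 1 / (j:ℝ) := by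
    rw [dig_nat r hr, dig_one, H]
  rw [e1, e2, e3, e4]
  have hsum : ∑ j ∈ Finset.Icc 1 (r-1), (1 / (x + (j:ℝ)) - 1 / j)
      = -x * ∑ j ∈ Finset.Icc 1 (r-1), 1 / ((j:ℝ) * (x + j)) := by
    rw [Finset.mul_sum]
    refine Finset.sum_congr rfl fun j hj => ?_
    have hj1 : 1 ≤ j := (Finset.mem_Icc.mp hj).1
    have hjpos : (0:ℝ) < j := by exact_mod_cast hj1
    have hxj : x + (j:ℝ) ≠ 0 := by positivity
    rw [div_sub_div _ _ hxj hjpos.ne', mul_one_div, div_eq_div_iff (by positivity) (by positivity)]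
    ring
  have expand : digamma (x + 1) + ∑ j ∈ Finset.Icc 1 (r-1), 1 / (x + (j:ℝ))
      - (digamma 1 + ∑ j ∈ Finset.Icc 1 (r-1), 1 / (j:ℝ))
      = (digamma (x + 1) - digamma 1)
        + ∑ j ∈ Finset.Icc 1 (r-1), (1 / (x + (j:ℝ)) - 1 / j) := by
    rw [Finset.sum_sub_distrib]
    ring
  rw [expand, hsum]
  have hA : ∀ A : ℝ, Real.Gamma (r:ℝ) * (A / (x * Real.Gamma (r:ℝ))) = A / x := fun A => by
    field_simp
  rw [hA]
  field_simp
  ring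

lemma continuousAt_rise {r : ℝ} (hr : 0 ≤ r) {x : ℝ} (hx : 0 < x) :
    ContinuousAt (fun y => rise y r) x := by
  unfold rise
  have hshift : ContinuousAt (fun y : ℝ => y + r) x := (continuous_add_right r).continuousAt
  have hG1 : ContinuousAt (fun y : ℝ => Real.Gamma (y + r)) x :=
    ContinuousAt.comp' (g := Real.Gamma) (f := fun y : ℝ => y + r)
      (continuousAt_Gamma' (show (0:ℝ) < x + r by linarith)) hshift
  exact hG1.div (continuousAt_Gamma' hx) (Real.Gamma_pos_of_pos hx).ne'

lemma continuousAt_hyp {r : ℝ} (hr : 0 < r) {x : ℝ} (hx : 0 < x) :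
    ContinuousAt (fun y => hyp r y) x := by
  simp only [hyp, if_neg hr.ne']
  have hΓr := (Real.Gamma_pos_of_pos hr).ne'
  have hshift : ContinuousAt (fun y : ℝ => y + r) x := (continuous_add_right r).continuousAt
  have hd1 : ContinuousAt (fun y : ℝ => digamma (y + r)) x :=
    ContinuousAt.comp' (g := digamma) (f := fun y : ℝ => y + r)
      (continuousAt_digamma (show (0:ℝ) < x + r by linarith)) hshift
  refine ContinuousAt.mul (ContinuousAt.div (continuousAt_rise hr.le hx)
    ((continuous_id.mul continuous_const).continuousAt) (by positivity)) ?_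
  exact hd1.sub continuousAt_const
lemma continuousAt_f {r : ℝ} (hr : 0 < r) {x : ℝ} (hx : 0 < x) :
    ContinuousAt (fun y => hyp r y / rise y r) x :=
  (continuousAt_hyp hr hx).div (continuousAt_rise hr.le hx) (rise_pos hx hr.le).ne'

lemma continuousAt_g {x : ℝ} (hx : 0 < x) :
    ContinuousAt (fun y => hyp 1 y / y ^ (1:ℝ)) x := by
  have h : (fun y : ℝ => hyp 1 y / y ^ (1:ℝ)) = fun y => hyp 1 y / y := by
    funext y; rw [Real.rpow_one]
  rw [h]
  exact (continuousAt_hyp one_pos hx).div continuousAt_id hx.ne'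

lemma integral_Sj (n j : ℕ) (hn : 1 ≤ n) (hj : 1 ≤ j) :
    ∫ x in (1:ℝ)..(n:ℝ), 1 / ((j:ℝ) * (x + j))
      = (1/(j:ℝ)) * (Real.log ((n:ℝ)+j) - Real.log (1+(j:ℝ))) := by
  have hj0 : (0:ℝ) < j := by exact_mod_cast hj
  have hn1 : (1:ℝ) ≤ n := by exact_mod_cast hn
  have h1 : ∀ x:ℝ, 1/((j:ℝ)*(x+j)) = (1/(j:ℝ)) * (1/(x+j)) := fun x =>
    (one_div_mul_one_div _ _).symm
  simp_rw [h1]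
  rw [intervalIntegral.integral_const_mul]
  congr 1
  have h2 := intervalIntegral.integral_comp_add_right (a := (1:ℝ)) (b := (n:ℝ))
    (fun x => 1/x) (j:ℝ)
  rw [h2, integral_one_div, Real.log_div (by positivity) (by positivity)]
  intro h0
  rw [Set.mem_uIcc] at h0
  rcases h0 with ⟨h0, _⟩ | ⟨h0, _⟩ <;> linarith

lemma main_eq (r : ℕ) (hr : 1 ≤ r) (n : ℕ) (hn : 1 ≤ n) :
    Real.Gamma r * bseq r n = yseq 1 n - ∑ j ∈ Finset.Icc 1 (r-1),
      (1/(j:ℝ)) * ((H (n+j) - H j) - (Real.log ((n:ℝ)+j) - Real.log (1+(j:ℝ)))) := by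
  have hr0 : (0:ℝ) < r := by exact_mod_cast hr
  have hn1 : (1:ℝ) ≤ n := by exact_mod_cast hn
  have hSj_cont : ∀ j ∈ Finset.Icc 1 (r-1),
      ContinuousOn (fun x : ℝ => 1/((j:ℝ)*(x+j))) (Set.uIcc (1:ℝ) n) := by
    intro j hj
    have hj0 : (0:ℝ) < j := by exact_mod_cast (Finset.mem_Icc.mp hj).1
    intro x hxmem
    have hx1 : (1:ℝ) ≤ x := by rw [Set.uIcc_of_le hn1] at hxmem; exact hxmem.1
    refine (ContinuousAt.div continuousAt_const
      ((continuous_const.mul (continuous_add_right (j:ℝ))).continuousAt) ?_).continuousWithinAt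
    exact (mul_pos hj0 (by show (0:ℝ) < x + j; linarith)).ne'
  have hg_int : IntervalIntegrable (fun x => hyp 1 x / x ^ (1:ℝ)) volume 1 n := by
    apply ContinuousOn.intervalIntegrable
    intro x hxmem
    have hx1 : (1:ℝ) ≤ x := by rw [Set.uIcc_of_le hn1] at hxmem; exact hxmem.1
    exact (continuousAt_g (by linarith)).continuousWithinAt
  have hSj_int : ∀ j ∈ Finset.Icc 1 (r-1),
      IntervalIntegrable (fun x : ℝ => 1/((j:ℝ)*(x+j))) volume 1 n := fun j hj =>
    (hSj_cont j hj).intervalIntegrable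
  have hS_int : IntervalIntegrable
      (fun x => ∑ j ∈ Finset.Icc 1 (r-1), 1/((j:ℝ)*(x+j))) volume 1 n := by
    apply ContinuousOn.intervalIntegrable
    exact continuousOn_finset_sum _ hSj_cont
  have hsum : Real.Gamma r * ∑ k ∈ Finset.Icc 1 n, hyp r k / rise k r
      = ∑ k ∈ Finset.Icc 1 n, hyp 1 k / (k:ℝ)^(1:ℝ)
        - ∑ j ∈ Finset.Icc 1 (r-1), (1/(j:ℝ)) * (H (n+j) - H j) := by
    rw [Finset.mul_sum]
    have hterm : ∀ k ∈ Finset.Icc 1 n, Real.Gamma (r:ℝ) * (hyp r (k:ℝ) / rise (k:ℝ) r)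
        = hyp 1 (k:ℝ) / (k:ℝ)^(1:ℝ)
          - ∑ j ∈ Finset.Icc 1 (r-1), 1/((j:ℝ)*((k:ℝ)+j)) := by
      intro k hk
      have hk0 : 0 < k := (Finset.mem_Icc.mp hk).1
      exact key_id r hr (by exact_mod_cast hk0)
    rw [Finset.sum_congr rfl hterm]
    rw [Finset.sum_sub_distrib]
    congr 1
    rw [Finset.sum_comm]
    refine Finset.sum_congr rfl fun j hj => ?_
    have hj1 : 1 ≤ j := (Finset.mem_Icc.mp hj).1
    rw [← sum_inv_shift n j, Finset.mul_sum]
    refine Finset.sum_congr rfl fun k _ => ?_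
    rw [one_div_mul_one_div]
  have hint : Real.Gamma r * ∫ x in (1:ℝ)..(n:ℝ), hyp r x / rise x r
      = (∫ x in (1:ℝ)..(n:ℝ), hyp 1 x / x^(1:ℝ))
        - ∑ j ∈ Finset.Icc 1 (r-1), (1/(j:ℝ)) * (Real.log ((n:ℝ)+j) - Real.log (1+(j:ℝ))) := by
    rw [← intervalIntegral.integral_const_mul]
    rw [intervalIntegral.integral_congr (g := fun x => hyp 1 x / x^(1:ℝ)
      - ∑ j ∈ Finset.Icc 1 (r-1), 1/((j:ℝ)*(x+j)))
      (fun x hxmem => key_id r hr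
        (by rw [Set.uIcc_of_le hn1] at hxmem; linarith [hxmem.1]))]
    rw [intervalIntegral.integral_sub hg_int hS_int,
      intervalIntegral.integral_finset_sum hSj_int]
    congr 1
    exact Finset.sum_congr rfl fun j hj => integral_Sj n j hn (Finset.mem_Icc.mp hj).1
  unfold bseq yseq
  rw [mul_sub, hsum, hint]
  have hfin : ∑ j ∈ Finset.Icc 1 (r-1),
      (1/(j:ℝ)) * ((H (n+j) - H j) - (Real.log ((n:ℝ)+j) - Real.log (1+(j:ℝ))))
      = ∑ j ∈ Finset.Icc 1 (r-1), (1/(j:ℝ)) * (H (n+j) - H j)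
        - ∑ j ∈ Finset.Icc 1 (r-1), (1/(j:ℝ)) * (Real.log ((n:ℝ)+j) - Real.log (1+(j:ℝ))) := by
    rw [← Finset.sum_sub_distrib]
    exact Finset.sum_congr rfl fun j _ => by ring
  rw [hfin]
  ring

theorem gamma_bar_eval (r : ℕ) (hr : 1 ≤ r) (γ₁ γbar : ℝ)
    (h₁ : Tendsto (yseq 1) atTop (𝓝 γ₁))
    (hb : Tendsto (bseq r) atTop (𝓝 γbar)) :
    γbar = (1 / Real.Gamma r) *
      (γ₁ - (digamma r + Real.eulerMascheroniConstant) * Real.eulerMascheroniConstant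
        + ∑ j ∈ Finset.Icc 1 (r - 1), (H j - Real.log (1 + (j : ℝ))) / (j : ℝ)) := by
  have hr0 : (0:ℝ) < r := by exact_mod_cast hr
  have hΓ : Real.Gamma (r:ℝ) ≠ 0 := (Real.Gamma_pos_of_pos hr0).ne'
  set γ := Real.eulerMascheroniConstant with hγdef
  have hcj : ∀ j : ℕ, 1 ≤ j → Tendsto (fun n : ℕ =>
      (H (n+j) - H j) - (Real.log ((n:ℝ)+j) - Real.log (1+(j:ℝ)))) atTop
      (𝓝 (γ - H j + Real.log (1+(j:ℝ)))) := by
    intro j hj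
    have h1 : Tendsto (fun n : ℕ => (harmonic n : ℝ) - Real.log n) atTop (𝓝 γ) :=
      Real.tendsto_harmonic_sub_log
    have h2 : Tendsto (fun n : ℕ => n + j) atTop atTop := tendsto_add_atTop_nat j
    have h4 : Tendsto (fun n : ℕ => H (n+j) - Real.log ((n:ℝ)+j)) atTop (𝓝 γ) := by
      apply (h1.comp h2).congr
      intro n
      simp only [Function.comp]
      rw [← H_eq_harmonic]
      push_cast
      ring_nf
    have h5 := (h4.sub_const (H j)).add_const (Real.log (1+(j:ℝ)))
    apply h5.congr
    intro n
    ring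
  have hsumlim : Tendsto (fun n : ℕ => ∑ j ∈ Finset.Icc 1 (r-1),
      (1/(j:ℝ)) * ((H (n+j) - H j) - (Real.log ((n:ℝ)+j) - Real.log (1+(j:ℝ))))) atTop
      (𝓝 (∑ j ∈ Finset.Icc 1 (r-1), (1/(j:ℝ)) * (γ - H j + Real.log (1+(j:ℝ))))) := by
    apply tendsto_finset_sum
    intro j hj
    exact (hcj j (Finset.mem_Icc.mp hj).1).const_mul _
  have hR : Tendsto (fun n : ℕ => (1/Real.Gamma r) * (yseq 1 n - ∑ j ∈ Finset.Icc 1 (r-1),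
      (1/(j:ℝ)) * ((H (n+j) - H j) - (Real.log ((n:ℝ)+j) - Real.log (1+(j:ℝ)))))) atTop
      (𝓝 ((1/Real.Gamma r) * (γ₁ - ∑ j ∈ Finset.Icc 1 (r-1),
        (1/(j:ℝ)) * (γ - H j + Real.log (1+(j:ℝ)))))) :=
    (h₁.sub hsumlim).const_mul _
  have hEq : ∀ᶠ n in atTop, bseq r n = (1/Real.Gamma r) * (yseq 1 n
      - ∑ j ∈ Finset.Icc 1 (r-1),
        (1/(j:ℝ)) * ((H (n+j) - H j) - (Real.log ((n:ℝ)+j) - Real.log (1+(j:ℝ))))) := by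
    filter_upwards [eventually_ge_atTop 1] with n hn
    have h := main_eq r hr n hn
    rw [← h]
    field_simp
  have hb' := hR.congr' (hEq.mono fun n h => h.symm)
  have hγbar := tendsto_nhds_unique hb hb'
  rw [hγbar]
  have hd : digamma r + γ = H (r-1) := by rw [dig_nat r hr]; ring
  rw [hd]
  have hs1 : ∑ j ∈ Finset.Icc 1 (r-1), (1/(j:ℝ)) * (γ - H j + Real.log (1+(j:ℝ)))
      = γ * (∑ j ∈ Finset.Icc 1 (r-1), (1:ℝ)/(j:ℝ))
        - ∑ j ∈ Finset.Icc 1 (r-1), (H j - Real.log (1+(j:ℝ)))/(j:ℝ) := by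
    rw [Finset.mul_sum, ← Finset.sum_sub_distrib]
    exact Finset.sum_congr rfl fun j _ => by ring
  have hs2 : ∑ j ∈ Finset.Icc 1 (r-1), (1:ℝ)/(j:ℝ) = H (r-1) := rfl
  rw [hs1, hs2]
  have hfin : ∀ s : ℝ, (1/Real.Gamma (r:ℝ)) * (γ₁ - (γ * H (r-1) - s))
      = (1/Real.Gamma (r:ℝ)) * (γ₁ - H (r-1) * γ + s) := fun s => by ring
  exact hfin _
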